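/- For the Koszul-type differential on two generators (D y = z, D z = 0, over k[y,z]), the cohomology is trivial in positive degree: every polynomial P(y,z) with D(P) = 0 and P(0,0) = 0 is of the form D(Q) for some polynomial Q. -/

import Mathlib

open MvPolynomial

/-- The Koszul differential on `k[y,z]`: `D y = z`, `D z = 0`
(variable `0` is `y`, variable `1` is `z`). -/
noncomputable def koszulD (k : Type) [CommRing k] :
    Derivation k (MvPolynomial (Fin 2) k) (MvPolynomial (Fin 2) k) :=
  mkDerivation k fun i => if i = 0 then X 1 else 0

lemma coeff_pderiv {k : Type} [CommRing k] (i : Fin 2) (m : Fin 2 →₀ ℕ)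
    (P : MvPolynomial (Fin 2) k) :
    coeff m (pderiv i P) = (m i + 1) * coeff (m + Finsupp.single i 1) P := by
  induction P using MvPolynomial.induction_on' with
  | monomial s a =>
    rw [pderiv_monomial, coeff_monomial, coeff_monomial]
    by_cases hs : s = m + Finsupp.single i 1
    · subst hs
      have h1 : m + Finsupp.single i 1 - Finsupp.single i 1 = m := by
        ext j; simp [Finsupp.single_apply]
      rw [if_pos h1]
      simp [Finsupp.single_apply, mul_comm]
    · rw [if_neg hs]
      by_cases h0 : s i = 0
      · by_cases h2 : s - Finsupp.single i 1 = m
        · simp [h0]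
        · simp [h2]
      · have : s - Finsupp.single i 1 ≠ m := by
          intro h
          apply hs
          ext j
          have hj := Finsupp.ext_iff.mp h j
          simp only [Finsupp.coe_tsub, Pi.sub_apply] at hj
          simp only [Finsupp.coe_add, Pi.add_apply]
          by_cases hji : j = i
          · subst hji; simp only [Finsupp.single_eq_same] at hj ⊢; omega
          · simp only [Finsupp.single_apply, if_neg (Ne.symm hji)] at hj ⊢; omega
        simp [this]
  | add p q hp hq => simp [hp, hq]; ring

/-- Rank-one case of the Basic Lemma: the cohomology of the Koszul differential
on `k[y,z]` is trivial in positive degree: every closed polynomial with zero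
constant term is exact. -/
theorem koszul_cohomology_trivial (k : Type) [Field k] [CharZero k]
    (P : MvPolynomial (Fin 2) k) (hclosed : koszulD k P = 0)
    (hconst : constantCoeff P = 0) :
    ∃ Q : MvPolynomial (Fin 2) k, P = koszulD k Q := by
  have hDeq : koszulD k = (X 1 : MvPolynomial (Fin 2) k) • pderiv 0 := by
    apply derivation_ext
    intro i
    fin_cases i <;> simp [koszulD, mkDerivation_X]
  have hP : pderiv 0 P = 0 := by
    rw [hDeq] at hclosed
    simp only [Derivation.coe_smul, Pi.smul_apply, smul_eq_mul] at hclosed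
    rcases mul_eq_zero.mp hclosed with h | h
    · exact absurd h (X_ne_zero 1)
    · exact h
  have hm0 : ∀ m ∈ P.support, m 0 = 0 := by
    intro m hm
    by_contra h
    have h1 : 1 ≤ m 0 := Nat.one_le_iff_ne_zero.mpr h
    have key := coeff_pderiv (k := k) 0 (m - Finsupp.single 0 1) P
    rw [hP] at key
    have hms : m - Finsupp.single 0 1 + Finsupp.single 0 1 = m := by
      ext j
      simp only [Finsupp.coe_add, Pi.add_apply, Finsupp.coe_tsub, Pi.sub_apply]
      by_cases hj : j = 0
      · subst hj; simp only [Finsupp.single_eq_same]; omega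
      · simp [Finsupp.single_apply, Ne.symm hj]
    rw [hms] at key
    rw [coeff_zero] at key
    exact (mem_support_iff.mp hm)
      ((mul_eq_zero.mp key.symm).resolve_left (Nat.cast_add_one_ne_zero _))
  have hmono : ∀ m ∈ P.support, m = Finsupp.single 1 (m 1) ∧ 1 ≤ m 1 := by
    intro m hm
    have h0 := hm0 m hm
    have hrep : m = Finsupp.single 1 (m 1) := by
      ext j
      fin_cases j <;> simp [h0, Finsupp.single_apply]
    refine ⟨hrep, ?_⟩
    by_contra h
    have hm1 : m 1 = 0 := by omega
    have : m = 0 := by rw [hrep, hm1, Finsupp.single_zero]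
    rw [this] at hm
    exact (mem_support_iff.mp hm) (by rw [← constantCoeff_eq]; exact hconst)
  refine ⟨∑ m ∈ P.support,
    monomial (Finsupp.single 0 1 + Finsupp.single 1 (m 1 - 1)) (coeff m P), ?_⟩
  rw [hDeq]
  simp only [Derivation.coe_smul, Pi.smul_apply, smul_eq_mul, map_sum, Finset.mul_sum]
  conv_lhs => rw [P.as_sum]
  refine Finset.sum_congr rfl fun m hm => ?_
  obtain ⟨hrep, h1⟩ := hmono m hm
  obtain ⟨n, hn⟩ : ∃ n, m 1 = n + 1 := ⟨m 1 - 1, by omega⟩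
  have hmn : m 1 - 1 = n := by omega
  rw [hmn, pderiv_monomial]
  have e1 : (Finsupp.single 0 1 + Finsupp.single (1 : Fin 2) n)
      - Finsupp.single 0 1 = Finsupp.single 1 n := add_tsub_cancel_left _ _
  have e2 : ((Finsupp.single (0 : Fin 2) 1 + Finsupp.single 1 n : Fin 2 →₀ ℕ)) 0 = 1 := by
    simp [Finsupp.single_apply]
  rw [e1, e2, X, monomial_mul]
  have e3 : Finsupp.single (1 : Fin 2) 1 + Finsupp.single 1 n = Finsupp.single 1 (m 1) := by
    rw [← Finsupp.single_add, add_comm, ← hn]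
  rw [e3, ← hrep, Nat.cast_one, mul_one, one_mul]
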